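/- For every FOC2 formula φ(x,y) with two free variables and every natural number n, there exists a FOC2 sentence (formula with no free variables) σ such that for every multi-relational graph G: G ⊨ σ if and only if there exist at least n ordered node pairs (a,b) with (G,a,b) ⊨ φ. Explicitly, σ can be taken as a disjunction over all tuples (k_1,…,k_n) of naturals with n ≤ Σ_{i=1}^n i·k_i ≤ 2n of the formula ⋀_{i=1}^{n-1} ∃^{≥k_i} x (∃^{[i]} y φ(x,y)) ∧ ∃^{≥k_n} x (∃^{≥n} y φ(x,y)), where ∃^{[i]} y ψ abbreviates ∃^{≥i} y ψ ∧ ¬∃^{≥i+1} y ψ. -/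

import Mathlib

inductive Var : Type
  | x | y
deriving DecidableEq

structure MRGraph (P1 P2 : Type) where
  V : Type
  [fintV : Fintype V]
  [decV : DecidableEq V]
  unary : P1 → V → Prop
  rel : P2 → V → V → Prop
  [decU : ∀ p, DecidablePred (unary p)]
  [decR : ∀ r, DecidableRel (rel r)]

attribute [instance] MRGraph.fintV MRGraph.decV MRGraph.decU MRGraph.decR

inductive FOC2 (P1 P2 : Type) : Type
  | tru : FOC2 P1 P2
  | atom : P1 → Var → FOC2 P1 P2
  | rel : P2 → Var → Var → FOC2 P1 P2
  | and : FOC2 P1 P2 → FOC2 P1 P2 → FOC2 P1 P2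
  | or : FOC2 P1 P2 → FOC2 P1 P2 → FOC2 P1 P2
  | not : FOC2 P1 P2 → FOC2 P1 P2
  | exge : ℕ → Var → FOC2 P1 P2 → FOC2 P1 P2

variable {P1 P2 : Type}

/-- Satisfaction of a `FOC2` formula in a multi-relational graph under an assignment. -/
def MRGraph.sat (G : MRGraph P1 P2) : (Var → G.V) → FOC2 P1 P2 → Prop
  | _, .tru => True
  | σ, .atom p v => G.unary p (σ v)
  | σ, .rel r u w => G.rel r (σ u) (σ w)
  | σ, .and φ ψ => G.sat σ φ ∧ G.sat σ ψ
  | σ, .or φ ψ => G.sat σ φ ∨ G.sat σ ψ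
  | σ, .not φ => ¬ G.sat σ φ
  | σ, .exge n v φ => ∃ S : Finset G.V, S.card = n ∧ ∀ a ∈ S, G.sat (Function.update σ v a) φ

/-- Quantifier depth. -/
def FOC2.depth : FOC2 P1 P2 → ℕ
  | .tru => 0
  | .atom _ _ => 0
  | .rel _ _ _ => 0
  | .and φ ψ => max φ.depth ψ.depth
  | .or φ ψ => max φ.depth ψ.depth
  | .not φ => φ.depth
  | .exge _ _ φ => φ.depth + 1

/-- All counting thresholds are at most `m`. -/
def FOC2.thresholdsLe (m : ℕ) : FOC2 P1 P2 → Prop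
  | .tru => True
  | .atom _ _ => True
  | .rel _ _ _ => True
  | .and φ ψ => φ.thresholdsLe m ∧ ψ.thresholdsLe m
  | .or φ ψ => φ.thresholdsLe m ∧ ψ.thresholdsLe m
  | .not φ => φ.thresholdsLe m
  | .exge n _ φ => n ≤ m ∧ φ.thresholdsLe m

/-- Free variables. -/
def FOC2.freeVars : FOC2 P1 P2 → Finset Var
  | .tru => ∅
  | .atom _ v => {v}
  | .rel _ u w => {u, w}
  | .and φ ψ => φ.freeVars ∪ ψ.freeVars
  | .or φ ψ => φ.freeVars ∪ ψ.freeVars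
  | .not φ => φ.freeVars
  | .exge _ v φ => φ.freeVars \ {v}

/-- Parse-tree size. -/
def FOC2.size : FOC2 P1 P2 → ℕ
  | .tru => 1
  | .atom _ _ => 1
  | .rel _ _ _ => 1
  | .and φ ψ => φ.size + ψ.size + 1
  | .or φ ψ => φ.size + ψ.size + 1
  | .not φ => φ.size + 1
  | .exge _ _ φ => φ.size + 1


/-- Finite disjunction. -/
def bigOr : List (FOC2 P1 P2) → FOC2 P1 P2
  | [] => .not .tru
  | f :: l => .or f (bigOr l)

/-- Finite conjunction. -/
def bigAnd : List (FOC2 P1 P2) → FOC2 P1 P2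
  | [] => .tru
  | f :: l => .and f (bigAnd l)

lemma bigOr_freeVars (l : List (FOC2 P1 P2)) (h : ∀ f ∈ l, f.freeVars = ∅) :
    (bigOr l).freeVars = ∅ := by
  induction l with
  | nil => simp [bigOr, FOC2.freeVars]
  | cons f l ih =>
    simp only [bigOr, FOC2.freeVars, h f (by simp),
      ih (fun g hg => h g (by simp [hg])), Finset.empty_union]

lemma sat_bigOr (G : MRGraph P1 P2) (σ : Var → G.V) (l : List (FOC2 P1 P2)) :
    G.sat σ (bigOr l) ↔ ∃ f ∈ l, G.sat σ f := by
  induction l with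
  | nil => simp [bigOr, MRGraph.sat]
  | cons f l ih => simp [bigOr, MRGraph.sat, ih]

lemma sat_bigAnd (G : MRGraph P1 P2) (σ : Var → G.V) (l : List (FOC2 P1 P2)) :
    G.sat σ (bigAnd l) ↔ ∀ f ∈ l, G.sat σ f := by
  induction l with
  | nil => simp [bigAnd, MRGraph.sat]
  | cons f l ih => simp [bigAnd, MRGraph.sat, ih]

lemma card_le_iff {V : Type*} [Fintype V] (P : V → Prop) [DecidablePred P] (k : ℕ) :
    (∃ S : Finset V, S.card = k ∧ ∀ a ∈ S, P a) ↔
      k ≤ (Finset.univ.filter P).card := by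
  constructor
  · rintro ⟨S, rfl, h⟩
    exact Finset.card_le_card
      (fun a ha => Finset.mem_filter.2 ⟨Finset.mem_univ a, h a ha⟩)
  · intro h
    obtain ⟨S, hS, hc⟩ := Finset.exists_subset_card_eq h
    exact ⟨S, hc, fun a ha => (Finset.mem_filter.1 (hS ha)).2⟩

lemma exists_le_sum {ι : Type*} [DecidableEq ι] (s : Finset ι) (f : ι → ℕ) (n : ℕ)
    (h : n ≤ ∑ i ∈ s, f i) :
    ∃ g : ι → ℕ, (∀ i, g i ≤ f i) ∧ ∑ i ∈ s, g i = n := by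
  induction s using Finset.induction_on generalizing n with
  | empty =>
    refine ⟨fun _ => 0, fun _ => Nat.zero_le _, ?_⟩
    simpa using (Nat.le_zero.mp (by simpa using h)).symm
  | @insert a s ha ih =>
    rw [Finset.sum_insert ha] at h
    rcases le_or_gt n (∑ i ∈ s, f i) with hle | hlt
    · obtain ⟨g, hg, hsum⟩ := ih _ hle
      refine ⟨Function.update g a 0, ?_, ?_⟩
      · intro i
        rcases eq_or_ne i a with rfl | hne
        · simp
        · rw [Function.update_of_ne hne]; exact hg i
      · rw [Finset.sum_insert ha, Function.update_self,
          Finset.sum_congr rfl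
            (fun i hi => Function.update_of_ne (by rintro rfl; exact ha hi) 0 g)]
        simpa using hsum
    · refine ⟨Function.update f a (n - ∑ i ∈ s, f i), ?_, ?_⟩
      · intro i
        rcases eq_or_ne i a with rfl | hne
        · rw [Function.update_self]; omega
        · rw [Function.update_of_ne hne]
      · rw [Finset.sum_insert ha, Function.update_self,
          Finset.sum_congr rfl
            (fun i hi => Function.update_of_ne (by rintro rfl; exact ha hi) _ f)]
        omega

lemma le_sum_min {ι : Type*} (s : Finset ι) (f : ι → ℕ) (n : ℕ)
    (h : n ≤ ∑ i ∈ s, f i) : n ≤ ∑ i ∈ s, min (f i) n := by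
  by_cases hc : ∀ i ∈ s, f i ≤ n
  · calc n ≤ ∑ i ∈ s, f i := h
      _ = ∑ i ∈ s, min (f i) n :=
        Finset.sum_congr rfl (fun i hi => (min_eq_left (hc i hi)).symm)
  · push_neg at hc
    obtain ⟨i, hi, hfi⟩ := hc
    calc n = min (f i) n := (min_eq_right hfi.le).symm
      _ ≤ ∑ i ∈ s, min (f i) n :=
        Finset.single_le_sum (f := fun i => min (f i) n) (fun _ _ => Nat.zero_le _) hi

lemma filter_lt_range (n c : ℕ) :
    (Finset.range n).filter (fun j => j < c) = Finset.range (min c n) := by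
  ext j; simp [Finset.mem_filter, Finset.mem_range, lt_min_iff, and_comm]

lemma var_sdiff_empty (s : Finset Var) : (s \ {Var.y}) \ {Var.x} = ∅ := by
  ext v
  cases v <;> simp

/-- For every `FOC2` formula `φ(x,y)` and every `n`, there is an `FOC2` sentence `σf`
holding in a graph iff there are at least `n` ordered node pairs satisfying `φ`. -/
theorem stmt3 {P1 P2 : Type} (φ : FOC2 P1 P2) (n : ℕ) :
    ∃ σf : FOC2 P1 P2, σf.freeVars = ∅ ∧
      ∀ (G : MRGraph P1 P2) (ρ : Var → G.V),
        (G.sat ρ σf ↔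
          ∃ S : Finset (G.V × G.V), S.card = n ∧
            ∀ p ∈ S, G.sat (fun w => match w with | Var.x => p.1 | Var.y => p.2) φ) := by
  classical
  set T : Finset (Fin n → Fin (n + 1)) :=
    Finset.univ.filter (fun t => ∑ j, (t j : ℕ) = n) with hT
  set σf : FOC2 P1 P2 :=
    bigOr (T.toList.map (fun t => bigAnd ((List.finRange n).map
      (fun j : Fin n => FOC2.exge (t j : ℕ) Var.x (FOC2.exge ((j : ℕ) + 1) Var.y φ))))) with hσ
  refine ⟨σf, ?_, ?_⟩
  · apply bigOr_freeVars
    intro f hf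
    simp only [List.mem_map] at hf
    obtain ⟨t, _, rfl⟩ := hf
    have : ∀ l : List (Fin n),
        (bigAnd (l.map
          (fun j : Fin n => FOC2.exge (t j : ℕ) Var.x (FOC2.exge ((j : ℕ) + 1) Var.y φ)))).freeVars
          = (∅ : Finset Var) := by
      intro l
      induction l with
      | nil => simp [bigAnd, FOC2.freeVars]
      | cons j l ih =>
        simp only [List.map_cons, bigAnd, FOC2.freeVars, ih, Finset.union_empty]
        exact var_sdiff_empty _
    exact this _
  · intro G ρ
    -- basic objects
    set Q : G.V → G.V → Prop :=
      fun a b => G.sat (fun w => match w with | Var.x => a | Var.y => b) φ with hQ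
    set cnt : G.V → ℕ := fun a => (Finset.univ.filter (Q a)).card with hcnt
    set m : ℕ → ℕ := fun k => (Finset.univ.filter (fun a => k ≤ cnt a)).card with hm
    -- assignment equality
    have hasg : ∀ a b : G.V,
        Function.update (Function.update ρ Var.x a) Var.y b =
          (fun w => match w with | Var.x => a | Var.y => b) := by
      intro a b
      funext w
      cases w <;> simp [Function.update]
    -- inner semantics
    have hinner : ∀ (a : G.V) (k : ℕ),
        G.sat (Function.update ρ Var.x a) (FOC2.exge k Var.y φ) ↔ k ≤ cnt a := by
      intro a k
      show (∃ S : Finset G.V, S.card = k ∧ _) ↔ _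
      rw [card_le_iff (fun b =>
        G.sat (Function.update (Function.update ρ Var.x a) Var.y b) φ) k]
      have hfe : Finset.univ.filter (fun b =>
          G.sat (Function.update (Function.update ρ Var.x a) Var.y b) φ)
          = Finset.univ.filter (Q a) :=
        Finset.filter_congr (fun b _ => by rw [hasg a b])
      rw [hfe, hcnt]
    -- outer semantics
    have houter : ∀ (k i : ℕ),
        G.sat ρ (FOC2.exge k Var.x (FOC2.exge i Var.y φ)) ↔ k ≤ m i := by
      intro k i
      show (∃ S : Finset G.V, S.card = k ∧ _) ↔ _
      rw [card_le_iff (fun a =>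
        G.sat (Function.update ρ Var.x a) (FOC2.exge i Var.y φ)) k]
      have hfe : Finset.univ.filter (fun a =>
          G.sat (Function.update ρ Var.x a) (FOC2.exge i Var.y φ))
          = Finset.univ.filter (fun a => i ≤ cnt a) :=
        Finset.filter_congr (fun a _ => hinner a i)
      rw [hfe, hm]
    -- semantics of σf
    have hsat : G.sat ρ σf ↔
        ∃ t : Fin n → Fin (n + 1), (∑ j, (t j : ℕ)) = n ∧
          ∀ j : Fin n, (t j : ℕ) ≤ m ((j : ℕ) + 1) := by
      rw [hσ, sat_bigOr]
      constructor
      · rintro ⟨f, hf, hsatf⟩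
        simp only [List.mem_map, Finset.mem_toList] at hf
        obtain ⟨t, ht, rfl⟩ := hf
        rw [sat_bigAnd] at hsatf
        refine ⟨t, (Finset.mem_filter.1 ht).2, fun j => ?_⟩
        rw [← houter]
        exact hsatf _ (List.mem_map.2 ⟨j, List.mem_finRange j, rfl⟩)
      · rintro ⟨t, hts, htm⟩
        refine ⟨_, List.mem_map.2 ⟨t, Finset.mem_toList.2
          (Finset.mem_filter.2 ⟨Finset.mem_univ t, hts⟩), rfl⟩, ?_⟩
        rw [sat_bigAnd]
        intro f hf
        simp only [List.mem_map] at hf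
        obtain ⟨j, _, rfl⟩ := hf
        rw [houter]
        exact htm j
    -- product count as sum of local counts
    have hprod : (Finset.univ.filter (fun p : G.V × G.V => Q p.1 p.2)).card
        = ∑ a, cnt a := by
      rw [Finset.card_filter, ← Finset.univ_product_univ, Finset.sum_product]
      exact Finset.sum_congr rfl (fun a _ => (Finset.card_filter _ _).symm)
    -- double counting: ∑ min(cnt a, n) = ∑_{j<n} m (j+1)
    have hdc : ∑ a, min (cnt a) n = ∑ j : Fin n, m ((j : ℕ) + 1) := by
      have hpt : ∀ a, min (cnt a) n = ∑ j ∈ Finset.range n,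
          (if j < cnt a then 1 else 0) := by
        intro a
        rw [← Finset.card_filter, filter_lt_range, Finset.card_range]
      calc ∑ a, min (cnt a) n
          = ∑ a, ∑ j ∈ Finset.range n, (if j < cnt a then 1 else 0) :=
            Finset.sum_congr rfl (fun a _ => hpt a)
        _ = ∑ j ∈ Finset.range n, ∑ a, (if j < cnt a then 1 else 0) :=
            Finset.sum_comm
        _ = ∑ j : Fin n, ∑ a, (if (j : ℕ) < cnt a then 1 else 0) :=
            (Fin.sum_univ_eq_sum_range _ n).symm
        _ = ∑ j : Fin n, m ((j : ℕ) + 1) := by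
            refine Finset.sum_congr rfl (fun j _ => ?_)
            simp only [hm]
            rw [Finset.card_filter]
            exact Finset.sum_congr rfl (fun a _ => if_congr Nat.lt_iff_add_one_le rfl rfl)
    -- final arithmetic equivalence
    have hfinal : (∃ t : Fin n → Fin (n + 1), (∑ j, (t j : ℕ)) = n ∧
          ∀ j : Fin n, (t j : ℕ) ≤ m ((j : ℕ) + 1)) ↔ n ≤ ∑ a, cnt a := by
      constructor
      · rintro ⟨t, hts, htm⟩
        calc n = ∑ j, (t j : ℕ) := hts.symm
          _ ≤ ∑ j : Fin n, min (m ((j : ℕ) + 1)) n :=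
            Finset.sum_le_sum (fun j _ =>
              le_min (htm j) (Nat.lt_succ_iff.mp (t j).isLt))
          _ ≤ ∑ j : Fin n, m ((j : ℕ) + 1) :=
            Finset.sum_le_sum (fun j _ => min_le_left _ _)
          _ = ∑ a, min (cnt a) n := hdc.symm
          _ ≤ ∑ a, cnt a := Finset.sum_le_sum (fun a _ => min_le_left _ _)
      · intro hN
        have h1 : n ≤ ∑ j : Fin n, m ((j : ℕ) + 1) := by
          rw [← hdc]; exact le_sum_min _ _ _ hN
        have h2 : n ≤ ∑ j : Fin n, min (m ((j : ℕ) + 1)) n :=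
          le_sum_min Finset.univ (fun j : Fin n => m ((j : ℕ) + 1)) n h1
        obtain ⟨g, hg, hgsum⟩ :=
          exists_le_sum Finset.univ (fun j : Fin n => min (m ((j : ℕ) + 1)) n) n h2
        refine ⟨fun j => ⟨g j, Nat.lt_succ_of_le ((hg j).trans (min_le_right _ _))⟩,
          by simpa using hgsum, fun j => (hg j).trans (min_le_left _ _)⟩
    exact hsat.trans (hfinal.trans
      (((card_le_iff (fun p : G.V × G.V => Q p.1 p.2) n).trans (by rw [hprod])).symm))
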